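/- arXiv:1202.3183 — 3 statements merged into one kernel-verified Lean document; each statement's English description precedes it below -/
import Mathlib

section
/- Let q > 1 and N real with |N - (q+1)| ≤ 2√q. Then both (complex) roots of the polynomial P(T) = 1 + (N-2)T + q^2 T^2 have absolute value q^{-1}; equivalently, writing P(T) = q^2(T - ω_1)(T - ω_2), one has |ω_1| = |ω_2| = 1/q. -/
/-- Riemann Hypothesis for the rank-two pure zeta of an elliptic curve: every
complex root of `1 + (N-2)T + q^2 T^2` has absolute value `1/q`. -/
theorem roots_on_circle_of_hasse (q N : ℝ) (hq : 1 < q)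
    (hN : |N - (q + 1)| ≤ 2 * Real.sqrt q) :
    ∀ z : ℂ, 1 + (N - 2 : ℂ) * z + (q : ℂ) ^ 2 * z ^ 2 = 0 →
      ‖z‖ = 1 / q := by
  intro z hz
  have hq0 : (0:ℝ) < q := by linarith
  set s := Real.sqrt q with hsdef
  have hs : s ^ 2 = q := Real.sq_sqrt hq0.le
  have hs0 : 0 ≤ s := Real.sqrt_nonneg q
  have hs1 : 1 < s := by nlinarith
  obtain ⟨hN1, hN2⟩ := abs_le.mp hN
  have key : (N - 2) ^ 2 < 4 * q ^ 2 := by nlinarith [sq_nonneg (s - 1), sq_nonneg (s + 1)]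
  -- conjugate equation
  have hz' : 1 + (N - 2 : ℂ) * (starRingEnd ℂ z) + (q : ℂ) ^ 2 * (starRingEnd ℂ z) ^ 2 = 0 := by
    have h := congrArg (starRingEnd ℂ) hz
    simpa [map_add, map_mul, map_pow, map_sub, map_ofNat, Complex.conj_ofReal] using h
  by_cases hzr : (starRingEnd ℂ) z = z
  · -- z is real: contradiction with negative discriminant
    exfalso
    have him : z.im = 0 := Complex.conj_eq_iff_im.mp hzr
    have hzre : (z.re : ℂ) = z := Complex.conj_eq_iff_re.mp hzr
    set x := z.re with hx
    rw [← hzre] at hz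
    have hxr : 1 + (N - 2) * x + q ^ 2 * x ^ 2 = 0 := by exact_mod_cast hz
    nlinarith [sq_nonneg (2 * q ^ 2 * x + (N - 2))]
  · have hsub : z - starRingEnd ℂ z ≠ 0 := sub_ne_zero.mpr fun h => hzr h.symm
    have h2 : ((N - 2 : ℂ) + (q : ℂ) ^ 2 * (z + starRingEnd ℂ z)) * (z - starRingEnd ℂ z) = 0 := by
      linear_combination hz - hz'
    have hsum : (N - 2 : ℂ) + (q : ℂ) ^ 2 * (z + starRingEnd ℂ z) = 0 :=
      (mul_eq_zero.mp h2).resolve_right hsub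
    have h3 : (q : ℂ) ^ 2 * (z * starRingEnd ℂ z) = 1 := by
      linear_combination z * hsum - hz
    rw [Complex.mul_conj] at h3
    have h4 : q ^ 2 * Complex.normSq z = 1 := by exact_mod_cast h3
    have h5 : ‖z‖ ^ 2 = (1 / q) ^ 2 := by
      rw [Complex.sq_norm]
      field_simp
      linarith
    have h7 : (‖z‖ - 1 / q) * (‖z‖ + 1 / q) = 0 := by
      linear_combination h5
    rcases mul_eq_zero.mp h7 with h | h
    · linarith
    · have := norm_nonneg z
      have : 0 < 1 / q := by positivity
      linarith
end

section
/- For any real q ≥ 2, the polynomial p(t) = q^2 t^4 + q(q-1) t^3 + (q+1) t + 1 has at least one root t with |t| ≠ q^{-1/2}. -/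
/-- The essential factor of the numerator of the partial rank-three zeta
`ζ^{12}_{E,3}` has a root off the circle `|t| = q^{-1/2}`:
the Riemann Hypothesis fails for this partial zeta. -/
theorem partial_rank_three_no_RH (q : ℝ) (hq : 2 ≤ q) :
    ∃ z : ℂ,
      (q : ℂ) ^ 2 * z ^ 4 + (q : ℂ) * ((q : ℂ) - 1) * z ^ 3 + ((q : ℂ) + 1) * z + 1 = 0 ∧
      ‖z‖ ≠ (Real.sqrt q)⁻¹ := by
  refine ⟨-1, by ring, ?_⟩
  rw [show ‖(-1 : ℂ)‖ = 1 by simp]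
  have h1 : (1:ℝ) < Real.sqrt q := by
    have := Real.lt_sqrt (x := 1) (y := q) (by norm_num)
    rw [this]; norm_num; linarith
  have : (Real.sqrt q)⁻¹ < 1 := by
    rw [inv_lt_one_iff₀]; right; exact h1
  intro h
  rw [← h] at this
  simp at this
end

section
/- Let Φ be a root system with Weyl group W, base Δ, longest element w_0, and fix p with Δ_p = Δ \ {α_p}; let w_p be the longest element of the parabolic Weyl group W_p generated by reflections in Δ_p. Define 𝔚_p = {w ∈ W : wΔ_p ⊆ Δ ∪ Φ^-}. Then the map w ↦ w_0 w w_p is an involution of 𝔚_p: it maps 𝔚_p to itself and applying it twice gives the identity. -/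
open scoped RealInnerProductSpace

/-- A (reduced, crystallographic) root system `Φ` in a real inner product
space, together with a chosen base `Δ`. -/
structure RootSystemBase (V : Type*) [NormedAddCommGroup V]
    [InnerProductSpace ℝ V] where
  Φ : Set V
  finite : Φ.Finite
  zero_not_mem : (0 : V) ∉ Φ
  neg_mem : ∀ α ∈ Φ, -α ∈ Φ
  reduced : ∀ α ∈ Φ, ∀ t : ℝ, t • α ∈ Φ → t = 1 ∨ t = -1
  crystallographic : ∀ α ∈ Φ, ∀ β ∈ Φ, ∃ n : ℤ, (n : ℝ) = 2 * ⟪α, β⟫ / ⟪α, α⟫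
  reflect_mem : ∀ α ∈ Φ, ∀ β ∈ Φ, β - (2 * ⟪α, β⟫ / ⟪α, α⟫) • α ∈ Φ
  Δ : Finset V
  base_subset : ↑Δ ⊆ Φ
  base_indep : LinearIndependent ℝ (fun α : Δ => (α : V))
  base_pos_neg : ∀ α ∈ Φ,
    (∃ c : V → ℝ, (∀ β, 0 ≤ c β) ∧ α = ∑ β ∈ Δ, c β • β) ∨
    (∃ c : V → ℝ, (∀ β, 0 ≤ c β) ∧ α = -∑ β ∈ Δ, c β • β)

namespace RootSystemBase

variable {V : Type*} [NormedAddCommGroup V] [InnerProductSpace ℝ V]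
  (R : RootSystemBase V)

/-- The positive roots determined by the base `Δ`. -/
def posRoots : Set V :=
  {α ∈ R.Φ | ∃ c : V → ℝ, (∀ β, 0 ≤ c β) ∧ α = ∑ β ∈ R.Δ, c β • β}

/-- The negative roots determined by the base `Δ`. -/
def negRoots : Set V := {α | -α ∈ R.posRoots}

/-- The pairing `⟨x, α^∨⟩ = 2⟪x, α⟫/⟪α, α⟫` with the coroot `α^∨`. -/
noncomputable def copair (x α : V) : ℝ := 2 * ⟪x, α⟫ / ⟪α, α⟫

/-- The Weyl group: the subgroup of linear automorphisms of `V` generated by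
the reflections `s_α : x ↦ x - ⟨x, α^∨⟩ α` in the roots `α ∈ Φ`. -/
def weylGroup : Subgroup (V ≃ₗ[ℝ] V) :=
  Subgroup.closure
    {w | ∃ α ∈ R.Φ, ∀ x, w x = x - (2 * ⟪α, x⟫ / ⟪α, α⟫) • α}

/-- The length `ℓ(w) = |Φ_w|` where `Φ_w = Φ⁺ ∩ w⁻¹Φ⁻`. -/
noncomputable def length (w : V ≃ₗ[ℝ] V) : ℕ :=
  (R.posRoots ∩ ⇑w ⁻¹' R.negRoots).ncard

/-- `w₀` is a longest element of the Weyl group. -/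
def IsLongest (w₀ : V ≃ₗ[ℝ] V) : Prop :=
  w₀ ∈ R.weylGroup ∧ ∀ w ∈ R.weylGroup, R.length w ≤ R.length w₀

/-- The parabolic root subsystem `Φ_p` generated by `Δ_p = Δ \ {α_p}`:
the roots in the span of `Δ_p`. -/
def paraRoots (αp : V) : Set V :=
  R.Φ ∩ (Submodule.span ℝ (↑R.Δ \ {αp}) : Set V)

/-- The parabolic Weyl group `W_p`, generated by the reflections in `Φ_p`. -/
def paraWeylGroup (αp : V) : Subgroup (V ≃ₗ[ℝ] V) :=
  Subgroup.closure
    {w | ∃ α ∈ R.paraRoots αp, ∀ x, w x = x - (2 * ⟪α, x⟫ / ⟪α, α⟫) • α}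

/-- The length function of the parabolic subsystem `Φ_p`. -/
noncomputable def paraLength (αp : V) (w : V ≃ₗ[ℝ] V) : ℕ :=
  ((R.posRoots ∩ R.paraRoots αp) ∩ ⇑w ⁻¹' (R.negRoots ∩ R.paraRoots αp)).ncard

/-- `w_p` is a longest element of the parabolic Weyl group `W_p`. -/
def IsParaLongest (αp : V) (wp : V ≃ₗ[ℝ] V) : Prop :=
  wp ∈ R.paraWeylGroup αp ∧
    ∀ w ∈ R.paraWeylGroup αp, R.paraLength αp w ≤ R.paraLength αp wp

end RootSystemBase

noncomputable section AuxDev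

open scoped Classical

namespace RootSystemBase

variable {V : Type*} [NormedAddCommGroup V] [InnerProductSpace ℝ V]

private lemma refl_invol (α : V) :
    Function.Involutive (fun x : V => x - (2 * ⟪α, x⟫ / ⟪α, α⟫) • α) := by
  intro x
  simp only
  rcases eq_or_ne (⟪α, α⟫ : ℝ) 0 with h0 | h0
  · have : α = 0 := by rwa [inner_self_eq_zero] at h0
    simp [this]
  · rw [inner_sub_right, inner_smul_right]
    rw [show (2 * (⟪α, x⟫ - 2 * ⟪α, x⟫ / ⟪α, α⟫ * ⟪α, α⟫) / ⟪α, α⟫ : ℝ)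
        = -(2 * ⟪α, x⟫ / ⟪α, α⟫) by field_simp; ring]
    rw [neg_smul, sub_neg_eq_add, sub_add_cancel]

/-- The reflection in the vector `α` (the identity if `α = 0`). -/
noncomputable def reflV (α : V) : V ≃ₗ[ℝ] V :=
  LinearEquiv.ofInvolutive
    { toFun := fun x => x - (2 * ⟪α, x⟫ / ⟪α, α⟫) • α
      map_add' := by
        intro x y
        show x + y - (2 * ⟪α, x + y⟫ / ⟪α, α⟫) • α = _
        rw [inner_add_right]
        rw [show (2 * (⟪α, x⟫ + ⟪α, y⟫) / ⟪α, α⟫) = 2 * ⟪α, x⟫ / ⟪α, α⟫ + 2 * ⟪α, y⟫ / ⟪α, α⟫ by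
          ring]
        rw [add_smul]
        show _ = x - _ + (y - _)
        abel
      map_smul' := by
        intro c x
        show c • x - (2 * ⟪α, c • x⟫ / ⟪α, α⟫) • α = c • (x - _)
        simp only [inner_smul_right, RingHom.id_apply, smul_sub, smul_smul]
        congr 2
        ring }
    (refl_invol α)

@[simp] lemma reflV_apply (α x : V) :
    reflV α x = x - (2 * ⟪α, x⟫ / ⟪α, α⟫) • α := rfl

lemma reflV_involutive (α : V) : Function.Involutive (reflV α) := refl_invol α

lemma reflV_mul_self (α : V) : reflV α * reflV α = 1 :=
  LinearEquiv.ext fun x => reflV_involutive α x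

lemma reflV_neg (α : V) : reflV (-α) = reflV α := by
  refine LinearEquiv.ext fun x => ?_
  simp only [reflV_apply, inner_neg_left, inner_neg_right, neg_neg, smul_neg]
  rw [show (2 * -⟪α, x⟫ / ⟪α, α⟫ : ℝ) = -(2 * ⟪α, x⟫ / ⟪α, α⟫) by ring]
  rw [neg_smul, neg_neg]

lemma reflV_apply_self (α : V) (h : α ≠ 0) : reflV α α = -α := by
  have h0 : (⟪α, α⟫ : ℝ) ≠ 0 := by
    rw [ne_eq, inner_self_eq_zero]; exact h
  rw [reflV_apply]
  rw [show (2 * ⟪α, α⟫ / ⟪α, α⟫ : ℝ) = 2 by field_simp]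
  rw [two_smul]
  abel

variable (R : RootSystemBase V)

lemma root_ne_zero {α : V} (h : α ∈ R.Φ) : α ≠ 0 :=
  fun e => R.zero_not_mem (e ▸ h)

lemma root_inner_self_pos {α : V} (h : α ∈ R.Φ) : (0 : ℝ) < ⟪α, α⟫ := by
  rw [real_inner_self_eq_norm_mul_norm]
  have : (0:ℝ) < ‖α‖ := norm_pos_iff.2 (root_ne_zero R h)
  positivity

lemma coeff_unique {c d : V → ℝ}
    (h : ∑ β ∈ R.Δ, c β • β = ∑ β ∈ R.Δ, d β • β) : ∀ β ∈ R.Δ, c β = d β := by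
  intro β hβ
  have hz : ∑ β ∈ R.Δ, (c β - d β) • β = 0 := by
    simp only [sub_smul, Finset.sum_sub_distrib, h, sub_self]
  have hz' : ∑ i : R.Δ, (c i - d i) • (i : V) = 0 := by
    rw [Finset.sum_coe_sort R.Δ (fun β => (c β - d β) • β)]; exact hz
  have h2 := linearIndependent_iff'.1 R.base_indep Finset.univ
    (fun i : R.Δ => c i - d i) hz' ⟨β, hβ⟩ (Finset.mem_univ _)
  simp only at h2
  linarith

/-- Nonnegative combinations of the base. -/
def IsNN (x : V) : Prop :=
  ∃ c : V → ℝ, (∀ β, 0 ≤ c β) ∧ x = ∑ β ∈ R.Δ, c β • β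

lemma isNN_zero : R.IsNN 0 :=
  ⟨fun _ => 0, fun _ => le_refl _, by simp⟩

lemma isNN_add {x y : V} (hx : R.IsNN x) (hy : R.IsNN y) : R.IsNN (x + y) := by
  obtain ⟨c, hc, rfl⟩ := hx
  obtain ⟨d, hd, rfl⟩ := hy
  exact ⟨fun β => c β + d β, fun β => add_nonneg (hc β) (hd β), by
    simp [add_smul, Finset.sum_add_distrib]⟩

lemma isNN_smul {x : V} {t : ℝ} (ht : 0 ≤ t) (hx : R.IsNN x) : R.IsNN (t • x) := by
  obtain ⟨c, hc, rfl⟩ := hx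
  exact ⟨fun β => t * c β, fun β => mul_nonneg ht (hc β), by
    rw [Finset.smul_sum]
    exact Finset.sum_congr rfl fun β _ => by rw [smul_smul]⟩

lemma isNN_sum {ι : Type*} (s : Finset ι) (f : ι → V)
    (h : ∀ i ∈ s, R.IsNN (f i)) : R.IsNN (∑ i ∈ s, f i) := by
  classical
  induction s using Finset.induction_on with
  | empty => simpa using R.isNN_zero
  | insert _ _ hni ih =>
    rw [Finset.sum_insert hni]
    exact R.isNN_add (h _ (Finset.mem_insert_self _ _))
      (ih fun i hi => h i (Finset.mem_insert_of_mem hi))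

lemma mem_posRoots_iff {α : V} : α ∈ R.posRoots ↔ α ∈ R.Φ ∧ R.IsNN α := Iff.rfl

lemma posRoots_subset : R.posRoots ⊆ R.Φ := fun _ h => h.1

lemma mem_negRoots_iff {α : V} : α ∈ R.negRoots ↔ -α ∈ R.posRoots := Iff.rfl

lemma negRoots_subset : R.negRoots ⊆ R.Φ := by
  intro α h
  have := R.neg_mem _ (R.posRoots_subset h)
  rwa [neg_neg] at this

lemma not_pos_and_neg {α : V} (hp : α ∈ R.posRoots) (hn : α ∈ R.negRoots) : False := by
  obtain ⟨hΦ, c, hc, hα⟩ := hp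
  obtain ⟨_, d, hd, hα'⟩ := hn
  have hsum : ∑ β ∈ R.Δ, (c β + d β) • β = ∑ β ∈ R.Δ, (0 : ℝ) • β := by
    simp only [add_smul, Finset.sum_add_distrib, zero_smul, Finset.sum_const_zero]
    rw [← hα, ← hα']
    abel
  have hz := R.coeff_unique hsum
  have : α = 0 := by
    rw [hα]
    refine Finset.sum_eq_zero fun β hβ => ?_
    have h1 : c β + d β = 0 := hz β hβ
    have : c β = 0 := le_antisymm (by linarith [hd β]) (hc β)
    rw [this, zero_smul]
  exact root_ne_zero R hΦ this

lemma pos_or_neg {α : V} (h : α ∈ R.Φ) : α ∈ R.posRoots ∨ α ∈ R.negRoots := by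
  rcases R.base_pos_neg α h with ⟨c, hc, hα⟩ | ⟨c, hc, hα⟩
  · exact Or.inl ⟨h, c, hc, hα⟩
  · refine Or.inr ⟨R.neg_mem _ h, c, hc, ?_⟩
    rw [hα, neg_neg]

lemma neg_mem_negRoots {α : V} (h : α ∈ R.posRoots) : -α ∈ R.negRoots := by
  rw [mem_negRoots_iff, neg_neg]; exact h

lemma neg_mem_posRoots {α : V} (h : α ∈ R.negRoots) : -α ∈ R.posRoots := h

lemma base_subset_posRoots : ↑R.Δ ⊆ R.posRoots := by
  classical
  intro δ hδ
  have hδ' : δ ∈ R.Δ := hδ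
  refine ⟨R.base_subset hδ, fun β => if β = δ then 1 else 0, fun β => by positivity, ?_⟩
  rw [show ∑ β ∈ R.Δ, (if β = δ then (1:ℝ) else 0) • β = ∑ β ∈ R.Δ, (if β = δ then β else 0) by
    refine Finset.sum_congr rfl fun β _ => ?_
    split <;> simp]
  rw [Finset.sum_ite_eq' R.Δ δ (fun β => β), if_pos hδ']

lemma reflV_mem_weylGroup {α : V} (h : α ∈ R.Φ) : reflV α ∈ R.weylGroup :=
  Subgroup.subset_closure ⟨α, h, fun _ => rfl⟩

lemma reflV_inner (α x y : V) : ⟪reflV α x, reflV α y⟫ = ⟪x, y⟫ := by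
  rcases eq_or_ne α 0 with rfl | h
  · simp
  · have hA : (⟪α, α⟫ : ℝ) ≠ 0 := by rwa [ne_eq, inner_self_eq_zero]
    simp only [reflV_apply, inner_sub_left, inner_sub_right, inner_smul_left,
      inner_smul_right, RCLike.conj_to_real, real_inner_comm x α]
    field_simp
    ring

lemma weylGroup_inner' {w : V ≃ₗ[ℝ] V} (hw : w ∈ R.weylGroup) :
    ∀ x y : V, ⟪w x, w y⟫ = ⟪x, y⟫ := by
  induction hw using Subgroup.closure_induction with
  | mem u hu =>
    intro x y
    obtain ⟨α, _, hu⟩ := hu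
    have h3 : ∀ z, u z = reflV α z := fun z => hu z
    rw [h3 x, h3 y, reflV_inner]
  | one => simp
  | mul u v _ _ hu hv =>
    intro x y
    show (⟪u (v x), u (v y)⟫ : ℝ) = _
    rw [hu (v x) (v y), hv x y]
  | inv u _ hu =>
    intro x y
    have h1 : ∀ z, u ((u⁻¹ : V ≃ₗ[ℝ] V) z) = z := fun z => by
      have : (u * u⁻¹ : V ≃ₗ[ℝ] V) z = z := by rw [mul_inv_cancel]; rfl
      exact this
    calc (⟪(u⁻¹ : V ≃ₗ[ℝ] V) x, (u⁻¹ : V ≃ₗ[ℝ] V) y⟫ : ℝ)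
        = ⟪u ((u⁻¹ : V ≃ₗ[ℝ] V) x), u ((u⁻¹ : V ≃ₗ[ℝ] V) y)⟫ := (hu _ _).symm
      _ = ⟪x, y⟫ := by rw [h1, h1]

lemma weylGroup_inner {w : V ≃ₗ[ℝ] V} (hw : w ∈ R.weylGroup) (x y : V) :
    ⟪w x, w y⟫ = ⟪x, y⟫ := R.weylGroup_inner' hw x y

lemma weylGroup_root_iff' {w : V ≃ₗ[ℝ] V} (hw : w ∈ R.weylGroup) :
    ∀ α : V, α ∈ R.Φ ↔ w α ∈ R.Φ := by
  induction hw using Subgroup.closure_induction with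
  | mem u hu =>
    intro α
    obtain ⟨β, hβ, hu⟩ := hu
    have hue : ∀ z, u z = reflV β z := fun z => hu z
    constructor
    · intro hα
      rw [hu α]
      exact R.reflect_mem β hβ α hα
    · intro hα
      have : u (u α) = α := by rw [hue, hue, reflV_involutive]
      rw [← this]
      rw [hue (u α)]
      exact R.reflect_mem β hβ _ hα
  | one => simp
  | mul u v _ _ hu hv =>
    intro α
    show α ∈ R.Φ ↔ u (v α) ∈ R.Φ
    rw [← hu (v α), ← hv α]
  | inv u _ hu =>
    intro α
    have h1 : u ((u⁻¹ : V ≃ₗ[ℝ] V) α) = α := by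
      have : (u * u⁻¹ : V ≃ₗ[ℝ] V) α = α := by rw [mul_inv_cancel]; rfl
      exact this
    constructor
    · intro hα
      refine (hu ((u⁻¹ : V ≃ₗ[ℝ] V) α)).2 ?_
      rwa [h1]
    · intro hα
      have := (hu _).1 hα
      rwa [h1] at this

lemma weylGroup_root_iff {w : V ≃ₗ[ℝ] V} (hw : w ∈ R.weylGroup) (α : V) :
    α ∈ R.Φ ↔ w α ∈ R.Φ := R.weylGroup_root_iff' hw α

lemma reflV_conj {w : V ≃ₗ[ℝ] V} (hw : w ∈ R.weylGroup) (α : V) :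
    w * reflV α * w⁻¹ = reflV (w α) := by
  refine LinearEquiv.ext fun x => ?_
  have h1 : w ((w⁻¹ : V ≃ₗ[ℝ] V) x) = x := by
    have : (w * w⁻¹ : V ≃ₗ[ℝ] V) x = x := by rw [mul_inv_cancel]; rfl
    exact this
  show w (reflV α ((w⁻¹ : V ≃ₗ[ℝ] V) x)) = _
  rw [reflV_apply, reflV_apply, map_sub, map_smul, h1]
  have e1 : (⟪w α, x⟫ : ℝ) = ⟪α, (w⁻¹ : V ≃ₗ[ℝ] V) x⟫ := by
    conv_lhs => rw [← h1]
    exact R.weylGroup_inner hw α _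
  have e2 : (⟪w α, w α⟫ : ℝ) = ⟪α, α⟫ := R.weylGroup_inner hw α α
  rw [e1, e2]

lemma simple_reflect_pos {δ : V} (hδ : δ ∈ R.Δ) {β : V}
    (hβ : β ∈ R.posRoots) (hne : β ≠ δ) : reflV δ β ∈ R.posRoots := by
  classical
  have hδΦ : δ ∈ R.Φ := R.base_subset hδ
  have hβΦ : β ∈ R.Φ := hβ.1
  have hsΦ : reflV δ β ∈ R.Φ := R.reflect_mem δ hδΦ β hβΦ
  rcases R.pos_or_neg hsΦ with h | h
  · exact h
  exfalso
  obtain ⟨c, hc, hβeq⟩ := hβ.2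
  obtain ⟨d, hd, hmeq⟩ := (R.neg_mem_posRoots h).2
  set k : ℝ := 2 * ⟪δ, β⟫ / ⟪δ, δ⟫ with hk
  have hite : ∑ γ ∈ R.Δ, (if γ = δ then k else 0) • γ = k • δ := by
    rw [show ∑ γ ∈ R.Δ, (if γ = δ then k else 0) • γ
        = ∑ γ ∈ R.Δ, (if γ = δ then k • γ else 0) by
      refine Finset.sum_congr rfl fun γ _ => ?_
      split <;> simp]
    rw [Finset.sum_ite_eq' R.Δ δ (fun γ => k • γ), if_pos hδ]
  have hsum : ∑ γ ∈ R.Δ, (c γ + d γ) • γ = ∑ γ ∈ R.Δ, (if γ = δ then k else 0) • γ := by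
    rw [hite]
    have : -(reflV δ β) = ∑ γ ∈ R.Δ, d γ • γ := hmeq
    rw [reflV_apply] at this
    have h2 : k • δ - β = ∑ γ ∈ R.Δ, d γ • γ := by
      rw [← this]; abel
    simp only [add_smul, Finset.sum_add_distrib, ← hβeq, ← h2]
    abel
  have huniq := R.coeff_unique hsum
  have hothers : ∀ γ ∈ R.Δ, γ ≠ δ → c γ = 0 := by
    intro γ hγ hγδ
    have := huniq γ hγ
    rw [if_neg hγδ] at this
    have := le_antisymm (by linarith [hd γ]) (hc γ)
    linarith [this, hd γ]
  have hβδ : β = c δ • δ := by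
    rw [hβeq]
    rw [Finset.sum_eq_single δ]
    · intro γ hγ hγδ
      rw [hothers γ hγ hγδ, zero_smul]
    · intro hδ'
      exact absurd hδ hδ'
  rcases R.reduced δ hδΦ (c δ) (hβδ ▸ hβΦ) with h1 | h1
  · rw [h1, one_smul] at hβδ
    exact hne hβδ
  · have := hc δ
    rw [h1] at this
    linarith

lemma maps_pos_of_maps_base {w : V ≃ₗ[ℝ] V}
    (hΦ : ∀ α ∈ R.Φ, w α ∈ R.Φ) (h : ∀ δ ∈ R.Δ, w δ ∈ R.posRoots) :
    ∀ α ∈ R.posRoots, w α ∈ R.posRoots := by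
  intro α hα
  refine ⟨hΦ α hα.1, ?_⟩
  obtain ⟨c, hc, hαeq⟩ := hα.2
  rw [hαeq, map_sum]
  simp only [map_smul]
  exact R.isNN_sum _ _ fun γ hγ => R.isNN_smul (hc γ) ((h γ hγ).2)

lemma maps_neg_of_maps_base {w : V ≃ₗ[ℝ] V}
    (hΦ : ∀ α ∈ R.Φ, w α ∈ R.Φ) (h : ∀ δ ∈ R.Δ, w δ ∈ R.negRoots) :
    ∀ α ∈ R.posRoots, w α ∈ R.negRoots := by
  intro α hα
  refine ⟨R.neg_mem _ (hΦ α hα.1), ?_⟩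
  obtain ⟨c, hc, hαeq⟩ := hα.2
  rw [hαeq, map_sum, ← Finset.sum_neg_distrib]
  simp only [map_smul, ← smul_neg]
  exact R.isNN_sum _ _ fun γ hγ => R.isNN_smul (hc γ) ((h γ hγ).2)

lemma length_mul_reflV {w : V ≃ₗ[ℝ] V} (hw : w ∈ R.weylGroup) {δ : V}
    (hδ : δ ∈ R.Δ) (hpos : w δ ∈ R.posRoots) :
    R.length (w * reflV δ) = R.length w + 1 := by
  classical
  have hδΦ : δ ∈ R.Φ := R.base_subset hδ
  have hδ0 : δ ≠ 0 := root_ne_zero R hδΦ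
  set A : Set V := R.posRoots ∩ ⇑w ⁻¹' R.negRoots with hA
  have hAfin : A.Finite := R.finite.subset fun x hx => hx.1.1
  have hkey : R.posRoots ∩ ⇑(w * reflV δ) ⁻¹' R.negRoots = (⇑(reflV δ) '' A) ∪ {δ} := by
    ext β
    constructor
    · rintro ⟨hβp, hβn⟩
      have hβn' : w (reflV δ β) ∈ R.negRoots := hβn
      by_cases hbd : β = δ
      · exact Or.inr (by simp [hbd])
      · left
        refine ⟨reflV δ β, ⟨R.simple_reflect_pos hδ hβp hbd, ?_⟩, reflV_involutive δ β⟩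
        show w (reflV δ β) ∈ R.negRoots
        exact hβn'
    · rintro (⟨γ, ⟨hγp, hγn⟩, rfl⟩ | hβδ)
      · have hγn' : w γ ∈ R.negRoots := hγn
        have hγδ : γ ≠ δ := by
          rintro rfl
          exact R.not_pos_and_neg hpos hγn'
        refine ⟨R.simple_reflect_pos hδ hγp hγδ, ?_⟩
        show w (reflV δ (reflV δ γ)) ∈ R.negRoots
        rw [reflV_involutive]
        exact hγn'
      · have hβδ' : β = δ := hβδ
        refine ⟨by rw [hβδ']; exact R.base_subset_posRoots hδ, ?_⟩
        show w (reflV δ β) ∈ R.negRoots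
        rw [hβδ', reflV_apply_self δ hδ0, map_neg]
        exact R.neg_mem_negRoots hpos
  have hdisj : Disjoint (⇑(reflV δ) '' A) {δ} := by
    rw [Set.disjoint_singleton_right]
    rintro ⟨γ, ⟨hγp, _⟩, hγδ⟩
    have h2 : reflV δ (reflV δ γ) = reflV δ δ := by rw [hγδ]
    rw [reflV_involutive, reflV_apply_self δ hδ0] at h2
    subst h2
    exact R.not_pos_and_neg (R.base_subset_posRoots hδ) hγp
  rw [length, hkey, Set.ncard_union_eq hdisj (hAfin.image _) (Set.finite_singleton δ),
    Set.ncard_image_of_injective _ (reflV δ).injective, Set.ncard_singleton]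
  rfl

lemma length_mul_reflV_neg {w : V ≃ₗ[ℝ] V} (hw : w ∈ R.weylGroup) {δ : V}
    (hδ : δ ∈ R.Δ) (hneg : w δ ∈ R.negRoots) :
    R.length w = R.length (w * reflV δ) + 1 := by
  have hδΦ : δ ∈ R.Φ := R.base_subset hδ
  have hδ0 : δ ≠ 0 := root_ne_zero R hδΦ
  have hw' : w * reflV δ ∈ R.weylGroup := mul_mem hw (R.reflV_mem_weylGroup hδΦ)
  have hp : (w * reflV δ) δ ∈ R.posRoots := by
    show w (reflV δ δ) ∈ R.posRoots
    rw [reflV_apply_self δ hδ0, map_neg]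
    exact R.neg_mem_posRoots hneg
  have := R.length_mul_reflV hw' hδ hp
  rwa [mul_assoc, reflV_mul_self, mul_one] at this

lemma isLongest_maps_pos_neg {w₀ : V ≃ₗ[ℝ] V} (hw₀ : R.IsLongest w₀) :
    ∀ α ∈ R.posRoots, w₀ α ∈ R.negRoots := by
  by_contra hcon
  push_neg at hcon
  have hexδ : ∃ δ ∈ R.Δ, w₀ δ ∈ R.posRoots := by
    by_contra hall
    push_neg at hall
    obtain ⟨α, hα, hαn⟩ := hcon
    refine hαn (R.maps_neg_of_maps_base (fun γ hγ => (R.weylGroup_root_iff hw₀.1 γ).1 hγ)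
      (fun δ hδ => ?_) α hα)
    have hδΦ := (R.weylGroup_root_iff hw₀.1 δ).1 (R.base_subset hδ)
    rcases R.pos_or_neg hδΦ with h | h
    · exact absurd h (hall δ hδ)
    · exact h
  obtain ⟨δ, hδ, hδp⟩ := hexδ
  have h1 := R.length_mul_reflV hw₀.1 hδ hδp
  have h2 := hw₀.2 (w₀ * reflV δ) (mul_mem hw₀.1 (R.reflV_mem_weylGroup (R.base_subset hδ)))
  omega

lemma reflV_inv (γ : V) : (reflV γ : V ≃ₗ[ℝ] V)⁻¹ = reflV γ :=
  inv_eq_of_mul_eq_one_right (reflV_mul_self γ)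

/-- The subgroup generated by the simple reflections. -/
def Wsimple : Subgroup (V ≃ₗ[ℝ] V) := Subgroup.closure (reflV '' ↑R.Δ)

/-- The height of a nonnegative combination of simple roots. -/
noncomputable def htFun (x : V) : ℝ :=
  open scoped Classical in
  if h : R.IsNN x then ∑ β ∈ R.Δ, h.choose β else 0

lemma htFun_eq {x : V} {c : V → ℝ} (hc : ∀ β, 0 ≤ c β)
    (hx : x = ∑ β ∈ R.Δ, c β • β) : R.htFun x = ∑ β ∈ R.Δ, c β := by
  have hNN : R.IsNN x := ⟨c, hc, hx⟩
  simp only [htFun]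
  rw [dif_pos hNN]
  obtain ⟨-, hch⟩ := hNN.choose_spec
  exact Finset.sum_congr rfl (R.coeff_unique (by rw [← hch, ← hx]))

lemma exists_inner_pos {α : V} (hα : α ∈ R.posRoots) : ∃ δ ∈ R.Δ, 0 < ⟪δ, α⟫ := by
  obtain ⟨hΦ, c, hc, hαeq⟩ := hα
  have hpos : (0:ℝ) < ⟪α, α⟫ := R.root_inner_self_pos hΦ
  by_contra hall
  push_neg at hall
  have : (⟪α, α⟫ : ℝ) = ∑ δ ∈ R.Δ, c δ * ⟪δ, α⟫ := by
    have h0 : (⟪α, α⟫ : ℝ) = ⟪∑ β ∈ R.Δ, c β • β, α⟫ := by rw [← hαeq]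
    rw [h0, sum_inner]
    exact Finset.sum_congr rfl fun δ _ => real_inner_smul_left δ α (c δ)
  have hle : (⟪α, α⟫ : ℝ) ≤ 0 := by
    rw [this]
    exact Finset.sum_nonpos fun δ hδ => mul_nonpos_of_nonneg_of_nonpos (hc δ) (hall δ hδ)
  linarith

lemma reflV_mem_Wsimple {α : V} (hα : α ∈ R.Φ) : reflV α ∈ R.Wsimple := by
  classical
  have main : ∀ α ∈ R.posRoots, reflV α ∈ R.Wsimple := by
    by_contra hcon
    push_neg at hcon
    set S := {β | β ∈ R.posRoots ∧ reflV β ∉ R.Wsimple} with hS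
    have hSne : S.Nonempty := by
      obtain ⟨β, hβ, hβn⟩ := hcon
      exact ⟨β, hβ, hβn⟩
    have hSfin : S.Finite := R.finite.subset fun x hx => hx.1.1
    obtain ⟨μ, hμS, hmin⟩ := Set.exists_min_image S R.htFun hSfin hSne
    obtain ⟨δ, hδ, hδin⟩ := R.exists_inner_pos hμS.1
    have hδΦ : δ ∈ R.Φ := R.base_subset hδ
    by_cases hμδ : μ = δ
    · exact hμS.2 (by
        rw [hμδ]
        exact Subgroup.subset_closure ⟨δ, hδ, rfl⟩)
    · have hβpos := R.simple_reflect_pos hδ hμS.1 hμδ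
      set k : ℝ := 2 * ⟪δ, μ⟫ / ⟪δ, δ⟫ with hk
      have hkpos : 0 < k := by
        have := R.root_inner_self_pos hδΦ
        positivity
      obtain ⟨c, hc, hμeq⟩ := hμS.1.2
      obtain ⟨d, hd, hβeq⟩ := hβpos.2
      -- relate coefficients
      have hite : ∑ γ ∈ R.Δ, (if γ = δ then k else 0) • γ = k • δ := by
        rw [show ∑ γ ∈ R.Δ, (if γ = δ then k else 0) • γ
            = ∑ γ ∈ R.Δ, (if γ = δ then k • γ else 0) by
          refine Finset.sum_congr rfl fun γ _ => ?_
          split <;> simp]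
        rw [Finset.sum_ite_eq' R.Δ δ (fun γ => k • γ), if_pos hδ]
      have hcoeff : ∀ γ ∈ R.Δ, d γ + (if γ = δ then k else 0) = c γ := by
        refine R.coeff_unique ?_
        simp only [add_smul, Finset.sum_add_distrib, hite]
        rw [← hβeq, ← hμeq, reflV_apply]
        abel
      have hht : R.htFun (reflV δ μ) < R.htFun μ := by
        rw [R.htFun_eq hd hβeq, R.htFun_eq hc hμeq]
        have h1 : ∑ γ ∈ R.Δ, d γ + k = ∑ γ ∈ R.Δ, c γ := by
          rw [← Finset.sum_congr rfl hcoeff, Finset.sum_add_distrib]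
          congr 1
          rw [Finset.sum_ite_eq' R.Δ δ (fun _ => k), if_pos hδ]
        linarith
      have hβnotS : reflV δ μ ∉ S := by
        intro hmem
        exact absurd (hmin _ hmem) (not_le.2 hht)
      have hβW : reflV (reflV δ μ) ∈ R.Wsimple := by
        by_contra hno
        exact hβnotS ⟨hβpos, hno⟩
      have hδW : reflV δ ∈ R.Wsimple := Subgroup.subset_closure ⟨δ, hδ, rfl⟩
      have hconj : reflV δ * reflV (reflV δ μ) * (reflV δ)⁻¹ = reflV (reflV δ (reflV δ μ)) :=
        R.reflV_conj (R.reflV_mem_weylGroup hδΦ) (reflV δ μ)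
      rw [reflV_involutive] at hconj
      refine hμS.2 ?_
      rw [← hconj]
      exact mul_mem (mul_mem hδW hβW) (inv_mem hδW)
  rcases R.pos_or_neg hα with h | h
  · exact main α h
  · have : reflV α = reflV (-α) := (reflV_neg α).symm
    rw [this]
    exact main (-α) (R.neg_mem_posRoots h)

lemma weylGroup_le_Wsimple : R.weylGroup ≤ R.Wsimple := by
  rw [weylGroup]
  rw [Subgroup.closure_le]
  rintro u ⟨α, hα, hu⟩
  have : u = reflV α := LinearEquiv.ext fun x => hu x
  rw [this]
  exact R.reflV_mem_Wsimple hα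

lemma word_mem_weylGroup {L : List V} (hL : ∀ γ ∈ L, γ ∈ R.Δ) :
    (L.map reflV).prod ∈ R.weylGroup := by
  induction L with
  | nil => exact one_mem _
  | cons γ M ih =>
    rw [List.map_cons, List.prod_cons]
    exact mul_mem (R.reflV_mem_weylGroup (R.base_subset (hL γ (by simp))))
      (ih fun x hx => hL x (by simp [hx]))

lemma word_prod_inv (L : List V) :
    ((L.map reflV : List (V ≃ₗ[ℝ] V)).prod)⁻¹ = (L.reverse.map reflV).prod := by
  induction L with
  | nil => simp
  | cons γ M ih =>
    rw [List.map_cons, List.prod_cons, mul_inv_rev, ih, List.reverse_cons,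
      List.map_append, List.prod_append]
    simp [reflV_inv]

lemma exists_word {w : V ≃ₗ[ℝ] V} (hw : w ∈ R.weylGroup) :
    ∃ L : List V, (∀ γ ∈ L, γ ∈ R.Δ) ∧ w = (L.map reflV).prod := by
  have hw' : w ∈ R.Wsimple := R.weylGroup_le_Wsimple hw
  clear hw
  induction hw' using Subgroup.closure_induction with
  | mem u hu =>
    obtain ⟨δ, hδ, rfl⟩ := hu
    exact ⟨[δ], by simpa using hδ, by simp⟩
  | one => exact ⟨[], by simp, rfl⟩
  | mul u v _ _ hu hv =>
    obtain ⟨L₁, hL₁, rfl⟩ := hu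
    obtain ⟨L₂, hL₂, rfl⟩ := hv
    refine ⟨L₁ ++ L₂, ?_, ?_⟩
    · intro γ hγ
      rcases List.mem_append.1 hγ with h | h
      · exact hL₁ γ h
      · exact hL₂ γ h
    · rw [List.map_append, List.prod_append]
  | inv u _ hu =>
    obtain ⟨L, hL, rfl⟩ := hu
    exact ⟨L.reverse, fun γ hγ => hL γ (List.mem_reverse.1 hγ), word_prod_inv L⟩

lemma scan {δ : V} (hδ : δ ∈ R.Δ) :
    ∀ M : List V, (∀ γ ∈ M, γ ∈ R.Δ) →
      (M.map reflV).prod δ ∈ R.negRoots →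
      ∃ N : List V, (∀ γ ∈ N, γ ∈ R.Δ) ∧ N.length + 1 = M.length ∧
        (M.map reflV).prod * reflV δ = (N.map reflV).prod := by
  intro M
  induction M with
  | nil =>
    intro _ hneg
    exfalso
    simp only [List.map_nil, List.prod_nil] at hneg
    have hδp : δ ∈ R.posRoots := R.base_subset_posRoots hδ
    exact R.not_pos_and_neg hδp hneg
  | cons γ M ih =>
    intro hM hneg
    have hγ : γ ∈ R.Δ := hM γ (by simp)
    have hγΦ : γ ∈ R.Φ := R.base_subset hγ
    have hM' : ∀ x ∈ M, x ∈ R.Δ := fun x hx => hM x (by simp [hx])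
    have humem : (M.map reflV).prod ∈ R.weylGroup := R.word_mem_weylGroup hM'
    set u := (M.map reflV).prod with hu
    have hprod : ((γ :: M).map reflV).prod = reflV γ * u := by
      rw [List.map_cons, List.prod_cons]
    have hβΦ : u δ ∈ R.Φ := (R.weylGroup_root_iff humem δ).1 (R.base_subset hδ)
    rcases R.pos_or_neg hβΦ with hpos | hneg'
    · have h2 : reflV γ (u δ) ∈ R.negRoots := by
        rw [hprod] at hneg
        exact hneg
      have h3 : u δ = γ := by
        by_contra hne
        exact R.not_pos_and_neg (R.simple_reflect_pos hγ hpos hne) h2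
      have h4 : reflV γ = u * reflV δ * u⁻¹ := by
        rw [← h3]
        exact (R.reflV_conj humem δ).symm
      refine ⟨M, hM', by simp, ?_⟩
      rw [hprod, h4]
      have h5 : u * reflV δ * u⁻¹ * u = u * reflV δ := by
        rw [mul_assoc, inv_mul_cancel, mul_one]
      rw [mul_assoc (u * reflV δ * u⁻¹) u (reflV δ)] at *
      rw [show u * reflV δ * u⁻¹ * (u * reflV δ) = u * reflV δ * u⁻¹ * u * reflV δ by
        rw [mul_assoc (u * reflV δ * u⁻¹) u (reflV δ)]]
      rw [h5, mul_assoc, reflV_mul_self, mul_one]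
    · obtain ⟨N, hN, hlen, heq⟩ := ih hM' hneg'
      refine ⟨γ :: N, ?_, by simp [← hlen], ?_⟩
      · intro x hx
        rcases List.mem_cons.1 hx with rfl | hx
        · exact hγ
        · exact hN x hx
      · rw [hprod, List.map_cons, List.prod_cons, mul_assoc, heq]

lemma eq_one_of_maps_pos {w : V ≃ₗ[ℝ] V} (hw : w ∈ R.weylGroup)
    (h : ∀ α ∈ R.posRoots, w α ∈ R.posRoots) : w = 1 := by
  obtain ⟨L, hL, rfl⟩ := R.exists_word hw
  clear hw
  suffices H : ∀ n (L : List V), L.length ≤ n → (∀ γ ∈ L, γ ∈ R.Δ) →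
      (∀ α ∈ R.posRoots, (L.map reflV).prod α ∈ R.posRoots) →
      (L.map reflV).prod = 1 by
    exact H L.length L le_rfl hL h
  intro n
  induction n with
  | zero =>
    intro L hlen _ _
    rw [List.length_eq_zero_iff.1 (Nat.le_zero.1 hlen)]
    rfl
  | succ n ihn =>
    intro L hlen hL hpos
    rcases List.eq_nil_or_concat L with rfl | ⟨M, δ, rfl⟩
    · rfl
    rw [List.concat_eq_append] at *
    have hδΔ : δ ∈ R.Δ := hL δ (by simp)
    have hMΔ : ∀ γ ∈ M, γ ∈ R.Δ := fun γ hγ => hL γ (by simp [hγ])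
    have humem : (M.map reflV).prod ∈ R.weylGroup := R.word_mem_weylGroup hMΔ
    set u := (M.map reflV).prod with hu
    have hprodL : ((M ++ [δ]).map reflV).prod = u * reflV δ := by
      rw [List.map_append, List.prod_append]
      simp [hu]
    have hδΦ : δ ∈ R.Φ := R.base_subset hδΔ
    have hδ0 : δ ≠ 0 := root_ne_zero R hδΦ
    have hβΦ : u δ ∈ R.Φ := (R.weylGroup_root_iff humem δ).1 hδΦ
    rcases R.pos_or_neg hβΦ with hp | hn
    · exfalso
      have h1 : ((M ++ [δ]).map reflV).prod δ ∈ R.posRoots :=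
        hpos δ (R.base_subset_posRoots hδΔ)
      rw [hprodL] at h1
      have h2 : u (reflV δ δ) ∈ R.posRoots := h1
      rw [reflV_apply_self δ hδ0, map_neg] at h2
      exact R.not_pos_and_neg hp (by exact h2)
    · obtain ⟨N, hN, hlen', heq⟩ := R.scan hδΔ M hMΔ hn
      have hprodN : ((M ++ [δ]).map reflV).prod = (N.map reflV).prod := by
        rw [hprodL, heq]
      rw [hprodN]
      have hlenN : N.length ≤ n := by
        have : (M ++ [δ]).length = M.length + 1 := by simp
        omega
      exact ihn N hlenN hN (fun α hα => by rw [← hprodN]; exact hpos α hα)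

lemma isLongest_sq {w₀ : V ≃ₗ[ℝ] V} (hw₀ : R.IsLongest w₀) : w₀ * w₀ = 1 := by
  refine R.eq_one_of_maps_pos (mul_mem hw₀.1 hw₀.1) fun α hα => ?_
  have h1 := R.isLongest_maps_pos_neg hw₀ α hα
  have h2 := R.isLongest_maps_pos_neg hw₀ _ (R.neg_mem_posRoots h1)
  rw [map_neg] at h2
  show w₀ (w₀ α) ∈ R.posRoots
  have h3 : -(-(w₀ (w₀ α))) ∈ R.posRoots := h2
  rwa [neg_neg] at h3

lemma simple_indecomposable {δ : V} (hδ : δ ∈ R.Δ)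
    {β γ : V} (hβ : β ∈ R.posRoots) (hγ : γ ∈ R.posRoots) (h : δ = β + γ) : False := by
  classical
  obtain ⟨hβΦ, b, hb, hβeq⟩ := hβ
  obtain ⟨hγΦ, c, hc, hγeq⟩ := hγ
  have hsum : ∑ η ∈ R.Δ, (b η + c η) • η = ∑ η ∈ R.Δ, (if η = δ then (1:ℝ) else 0) • η := by
    rw [show ∑ η ∈ R.Δ, (if η = δ then (1:ℝ) else 0) • η
        = ∑ η ∈ R.Δ, (if η = δ then η else 0) by
      refine Finset.sum_congr rfl fun η _ => ?_
      split <;> simp]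
    rw [Finset.sum_ite_eq' R.Δ δ (fun η => η), if_pos hδ]
    simp only [add_smul, Finset.sum_add_distrib, ← hβeq, ← hγeq]
    exact h.symm
  have huniq := R.coeff_unique hsum
  have hβd : β = b δ • δ := by
    rw [hβeq, Finset.sum_eq_single δ]
    · intro η hη hηδ
      have h1 := huniq η hη
      rw [if_neg hηδ] at h1
      have : b η = 0 := le_antisymm (by linarith [hc η]) (hb η)
      rw [this, zero_smul]
    · intro h'
      exact absurd hδ h'
  have hbδ : b δ = 1 := by
    rcases R.reduced δ (R.base_subset hδ) (b δ) (hβd ▸ hβΦ) with h1 | h1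
    · exact h1
    · have := hb δ
      rw [h1] at this
      linarith
  have hcδ : c δ = 0 := by
    have h1 := huniq δ hδ
    rw [if_pos rfl] at h1
    linarith
  have hγ0 : γ = 0 := by
    rw [hγeq, Finset.sum_eq_single δ]
    · rw [hcδ, zero_smul]
    · intro η hη hηδ
      have h1 := huniq η hη
      rw [if_neg hηδ] at h1
      have : c η = 0 := le_antisymm (by linarith [hb η]) (hc η)
      rw [this, zero_smul]
    · intro h'
      exact absurd hδ h'
  exact R.root_ne_zero hγΦ hγ0

lemma decompose {μ : V} (hμ : μ ∈ R.posRoots) (hμΔ : μ ∉ (↑R.Δ : Set V)) :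
    ∃ β ∈ R.posRoots, ∃ γ ∈ R.posRoots, μ = β + γ := by
  obtain ⟨δ, hδ, hin⟩ := R.exists_inner_pos hμ
  have hδΦ : δ ∈ R.Φ := R.base_subset hδ
  have hμΦ : μ ∈ R.Φ := hμ.1
  have hμδ : μ ≠ δ := fun h => hμΔ (h ▸ hδ)
  have hδip : (0:ℝ) < ⟪δ, δ⟫ := R.root_inner_self_pos hδΦ
  have hμip : (0:ℝ) < ⟪μ, μ⟫ := R.root_inner_self_pos hμΦ
  obtain ⟨n, hn⟩ := R.crystallographic δ hδΦ μ hμΦ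
  obtain ⟨m, hm⟩ := R.crystallographic μ hμΦ δ hδΦ
  have hμδ' : (⟪μ, δ⟫ : ℝ) = ⟪δ, μ⟫ := real_inner_comm δ μ
  have hnpos : (0:ℝ) < n := by
    rw [hn]
    positivity
  have hmpos : (0:ℝ) < m := by
    rw [hm, hμδ']
    positivity
  have hn1 : 1 ≤ n := by exact_mod_cast hnpos
  have hm1 : 1 ≤ m := by exact_mod_cast hmpos
  -- strict Cauchy-Schwarz
  have hδ0 : δ ≠ 0 := R.root_ne_zero hδΦ
  have hnδ : (0:ℝ) < ‖δ‖ := norm_pos_iff.2 hδ0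
  have hnμ : (0:ℝ) < ‖μ‖ := norm_pos_iff.2 (R.root_ne_zero hμΦ)
  have hCS : (⟪δ, μ⟫ : ℝ) < ‖δ‖ * ‖μ‖ := by
    rw [inner_lt_norm_mul_iff_real]
    intro heq
    have hμt : μ = (‖δ‖⁻¹ * ‖μ‖) • δ := by
      have h2 := congrArg (fun v => (‖δ‖)⁻¹ • v) heq
      simp only [smul_smul] at h2
      rw [inv_mul_cancel₀ (ne_of_gt hnδ), one_smul] at h2
      exact h2.symm
    rcases R.reduced δ hδΦ (‖δ‖⁻¹ * ‖μ‖) (hμt ▸ hμΦ) with h1 | h1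
    · rw [h1, one_smul] at hμt
      exact hμδ hμt
    · have : (0:ℝ) < ‖δ‖⁻¹ * ‖μ‖ := by positivity
      rw [h1] at this
      linarith
  have hsq : (⟪δ, μ⟫ : ℝ)^2 < (‖δ‖ * ‖μ‖)^2 := by
    have h0 : (0:ℝ) ≤ ⟪δ, μ⟫ := le_of_lt hin
    nlinarith
  have h4 : (n:ℝ) * (m:ℝ) = 4 * ⟪δ, μ⟫^2 / (‖δ‖^2 * ‖μ‖^2) := by
    rw [hn, hm, hμδ', real_inner_self_eq_norm_mul_norm, real_inner_self_eq_norm_mul_norm]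
    field_simp
    ring
  have hlt4 : (n:ℝ) * (m:ℝ) < 4 := by
    rw [h4, div_lt_iff₀ (by positivity)]
    nlinarith
  have hone : n = 1 ∨ m = 1 := by
    by_contra hcon
    push_neg at hcon
    have hn2 : 2 ≤ n := by omega
    have hm2 : 2 ≤ m := by omega
    have hn2' : (2:ℝ) ≤ (n:ℝ) := by exact_mod_cast hn2
    have hm2' : (2:ℝ) ≤ (m:ℝ) := by exact_mod_cast hm2
    nlinarith
  have hΦsub : μ - δ ∈ R.Φ := by
    rcases hone with h1 | h1
    · have h2 := R.reflect_mem δ hδΦ μ hμΦ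
      rw [← hn, h1] at h2
      rwa [Int.cast_one, one_smul] at h2
    · have h2 := R.reflect_mem μ hμΦ δ hδΦ
      rw [← hm, h1, Int.cast_one, one_smul] at h2
      have h3 := R.neg_mem _ h2
      rwa [neg_sub] at h3
  rcases R.pos_or_neg hΦsub with hp | hn'
  · exact ⟨μ - δ, hp, δ, R.base_subset_posRoots hδ, by abel⟩
  · exfalso
    have h5 : -(μ - δ) ∈ R.posRoots := R.neg_mem_posRoots hn'
    rw [neg_sub] at h5
    exact R.simple_indecomposable hδ h5 hμ (by abel)

lemma isLongest_base {w₀ : V ≃ₗ[ℝ] V} (hw₀ : R.IsLongest w₀) {δ : V} (hδ : δ ∈ R.Δ) :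
    -(w₀ δ) ∈ R.Δ := by
  have hsq := R.isLongest_sq hw₀
  have hδp : δ ∈ R.posRoots := R.base_subset_posRoots hδ
  have h1 : w₀ δ ∈ R.negRoots := R.isLongest_maps_pos_neg hw₀ δ hδp
  have hμp : -(w₀ δ) ∈ R.posRoots := R.neg_mem_posRoots h1
  by_contra hμΔ
  obtain ⟨β, hβ, γ, hγ, heq⟩ := R.decompose hμp hμΔ
  have hw₀w₀ : w₀ (w₀ δ) = δ := by
    have : (w₀ * w₀) δ = (1 : V ≃ₗ[ℝ] V) δ := by rw [hsq]
    exact this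
  have h2 : -δ = w₀ β + w₀ γ := by
    have := congrArg (fun v => w₀ v) heq
    simp only [map_neg, map_add] at this
    rw [hw₀w₀] at this
    linear_combination (norm := module) this
  have hβn := R.isLongest_maps_pos_neg hw₀ β hβ
  have hγn := R.isLongest_maps_pos_neg hw₀ γ hγ
  refine R.simple_indecomposable hδ (R.neg_mem_posRoots hβn) (R.neg_mem_posRoots hγn) ?_
  have := congrArg (fun v => -v) h2
  simp only [neg_neg, neg_add] at this
  exact this

lemma para_coeff_zero {αp : V} (hαp : αp ∈ R.Δ) {x : V} {c : V → ℝ}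
    (hx : x = ∑ β ∈ R.Δ, c β • β)
    (hsp : x ∈ (Submodule.span ℝ (↑R.Δ \ {αp}) : Set V)) :
    c αp = 0 ∧ x = ∑ β ∈ R.Δ.erase αp, c β • β := by
  classical
  have hsp' : x ∈ Submodule.span ℝ (↑(R.Δ.erase αp) : Set V) := by
    rwa [Finset.coe_erase]
  obtain ⟨f, -, hf⟩ := Submodule.mem_span_finset.1 hsp'
  set f' : V → ℝ := fun β => if β = αp then 0 else f β with hf'
  have hsum : ∑ β ∈ R.Δ, c β • β = ∑ β ∈ R.Δ, f' β • β := by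
    rw [← hx]
    rw [← Finset.add_sum_erase R.Δ (fun β => f' β • β) hαp]
    have h1 : f' αp • αp = 0 := by simp [hf']
    rw [h1, zero_add]
    rw [show ∑ β ∈ R.Δ.erase αp, f' β • β = ∑ β ∈ R.Δ.erase αp, f β • β from
      Finset.sum_congr rfl fun β hβ => by
        rw [hf']
        simp only [if_neg (Finset.ne_of_mem_erase hβ)]]
    exact hf.symm
  have huniq := R.coeff_unique hsum
  have hcαp : c αp = 0 := by
    have := huniq αp hαp
    simpa [hf'] using this
  refine ⟨hcαp, ?_⟩
  rw [hx, ← Finset.add_sum_erase R.Δ (fun β => c β • β) hαp, hcαp, zero_smul, zero_add]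

/-- The parabolic root subsystem as a root system with base `Δ \ {αp}`. -/
noncomputable def para (αp : V) (hαp : αp ∈ R.Δ) : RootSystemBase V where
  Φ := R.paraRoots αp
  finite := R.finite.subset Set.inter_subset_left
  zero_not_mem := fun h => R.zero_not_mem h.1
  neg_mem := fun α hα => ⟨R.neg_mem α hα.1, (Submodule.span ℝ _).neg_mem hα.2⟩
  reduced := fun α hα t ht => R.reduced α hα.1 t ht.1
  crystallographic := fun α hα β hβ => R.crystallographic α hα.1 β hβ.1
  reflect_mem := fun α hα β hβ =>
    ⟨R.reflect_mem α hα.1 β hβ.1,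
      Submodule.sub_mem _ hβ.2 (Submodule.smul_mem _ _ hα.2)⟩
  Δ := R.Δ.erase αp
  base_subset := by
    intro δ hδ
    have hδ' : δ ∈ R.Δ.erase αp := hδ
    have h1 : δ ∈ R.Δ := Finset.mem_of_mem_erase hδ'
    refine ⟨R.base_subset h1, Submodule.subset_span ?_⟩
    exact ⟨h1, Finset.ne_of_mem_erase hδ'⟩
  base_indep := by
    have hinj : Function.Injective
        (fun x : {y // y ∈ R.Δ.erase αp} => (⟨x.1, Finset.mem_of_mem_erase x.2⟩ : {y // y ∈ R.Δ})) := by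
      intro x y hxy
      have h1 : (x : V) = y := by simpa using congrArg Subtype.val hxy
      exact Subtype.ext h1
    exact R.base_indep.comp _ hinj
  base_pos_neg := by
    classical
    intro α hα
    rcases R.base_pos_neg α hα.1 with ⟨c, hc, hαeq⟩ | ⟨c, hc, hαeq⟩
    · obtain ⟨-, h2⟩ := R.para_coeff_zero hαp hαeq hα.2
      exact Or.inl ⟨c, hc, h2⟩
    · have hneg : -α ∈ (Submodule.span ℝ (↑R.Δ \ {αp}) : Set V) :=
        (Submodule.span ℝ _).neg_mem hα.2
      have hαeq' : -α = ∑ β ∈ R.Δ, c β • β := by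
        rw [hαeq, neg_neg]
      obtain ⟨-, h2⟩ := R.para_coeff_zero hαp hαeq' hneg
      refine Or.inr ⟨c, hc, ?_⟩
      rw [← h2, neg_neg]

lemma para_posRoots {αp : V} (hαp : αp ∈ R.Δ) :
    (R.para αp hαp).posRoots = R.posRoots ∩ R.paraRoots αp := by
  classical
  ext α
  constructor
  · rintro ⟨hαΦ, c, hc, hαeq⟩
    refine ⟨⟨hαΦ.1, fun β => if β = αp then 0 else c β, fun β => ?_, ?_⟩, hαΦ⟩
    · dsimp only
      split
      · exact le_rfl
      · exact hc β
    · have key : ∑ β ∈ R.Δ, (if β = αp then (0:ℝ) else c β) • β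
          = ∑ β ∈ R.Δ.erase αp, (if β = αp then (0:ℝ) else c β) • β := by
        rw [← Finset.add_sum_erase R.Δ _ hαp]
        simp
      rw [key, hαeq]
      exact (Finset.sum_congr rfl fun β hβ => by
        rw [if_neg (Finset.ne_of_mem_erase hβ)]).symm
  · rintro ⟨⟨hαΦ, c, hc, hαeq⟩, hαpara⟩
    obtain ⟨-, h2⟩ := R.para_coeff_zero hαp hαeq hαpara.2
    exact ⟨hαpara, c, hc, h2⟩

lemma para_negRoots {αp : V} (hαp : αp ∈ R.Δ) :
    (R.para αp hαp).negRoots = R.negRoots ∩ R.paraRoots αp := by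
  ext α
  show -α ∈ (R.para αp hαp).posRoots ↔ _
  rw [para_posRoots]
  constructor
  · rintro ⟨h1, h2⟩
    refine ⟨h1, ?_⟩
    have h3 := (R.para αp hαp).neg_mem _ (show -α ∈ (R.para αp hαp).Φ from h2)
    rwa [neg_neg] at h3
  · rintro ⟨h1, h2⟩
    exact ⟨h1, (R.para αp hαp).neg_mem _ h2⟩

lemma para_weylGroup {αp : V} (hαp : αp ∈ R.Δ) :
    (R.para αp hαp).weylGroup = R.paraWeylGroup αp := rfl

lemma para_length {αp : V} (hαp : αp ∈ R.Δ) (w : V ≃ₗ[ℝ] V) :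
    (R.para αp hαp).length w = R.paraLength αp w := by
  unfold length paraLength
  rw [para_posRoots, para_negRoots]

lemma para_isLongest {αp : V} (hαp : αp ∈ R.Δ) {wp : V ≃ₗ[ℝ] V}
    (hwp : R.IsParaLongest αp wp) : (R.para αp hαp).IsLongest wp := by
  constructor
  · rw [para_weylGroup]
    exact hwp.1
  · intro u hu
    rw [para_length, para_length]
    exact hwp.2 u (by rwa [para_weylGroup] at hu)

lemma paraWeylGroup_le {αp : V} : R.paraWeylGroup αp ≤ R.weylGroup := by
  apply Subgroup.closure_mono
  rintro u ⟨α, hα, hu⟩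
  exact ⟨α, hα.1, hu⟩

end RootSystemBase

end AuxDev

open RootSystemBase in
/-- The map `w ↦ w₀ w w_p` is an involution of
`𝔚_p = {w ∈ W : wΔ_p ⊆ Δ ∪ Φ⁻}`. -/
theorem frakW_involution {V : Type*} [NormedAddCommGroup V]
    [InnerProductSpace ℝ V] (R : RootSystemBase V) (αp : V) (hαp : αp ∈ R.Δ)
    (w₀ wp : V ≃ₗ[ℝ] V) (hw₀ : R.IsLongest w₀) (hwp : R.IsParaLongest αp wp) :
    ∀ w : V ≃ₗ[ℝ] V,
      w ∈ R.weylGroup → (∀ α ∈ (↑R.Δ \ {αp} : Set V), w α ∈ ↑R.Δ ∪ R.negRoots) →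
      (w₀ * w * wp ∈ R.weylGroup ∧
        (∀ α ∈ (↑R.Δ \ {αp} : Set V), (w₀ * w * wp) α ∈ ↑R.Δ ∪ R.negRoots)) ∧
      w₀ * (w₀ * w * wp) * wp = w := by
  intro w hwW hwmap
  classical
  set P := R.para αp hαp with hP
  have hplong : P.IsLongest wp := R.para_isLongest hαp hwp
  have hwpW : wp ∈ R.weylGroup := R.paraWeylGroup_le hwp.1
  have hw₀sq : w₀ * w₀ = 1 := R.isLongest_sq hw₀
  have hwpsq : wp * wp = 1 := P.isLongest_sq hplong
  refine ⟨⟨mul_mem (mul_mem hw₀.1 hwW) hwpW, ?_⟩, ?_⟩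
  · intro α hα
    have hααp : α ≠ αp := by simpa using hα.2
    have hαP : α ∈ P.Δ := by
      show α ∈ R.Δ.erase αp
      exact Finset.mem_erase.2 ⟨hααp, hα.1⟩
    have hβΔ' : -(wp α) ∈ P.Δ := P.isLongest_base hplong hαP
    set β := -(wp α) with hβ
    have hβmem : β ∈ (↑R.Δ \ {αp} : Set V) := by
      have h1 : β ∈ R.Δ.erase αp := hβΔ'
      exact ⟨Finset.mem_of_mem_erase h1, by simpa using Finset.ne_of_mem_erase h1⟩
    have hwβ := hwmap β hβmem
    have hcompute : (w₀ * w * wp) α = -(w₀ (w β)) := by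
      show w₀ (w (wp α)) = _
      have h2 : wp α = -β := by rw [hβ, neg_neg]
      rw [h2, map_neg, map_neg]
    rcases hwβ with h | h
    · left
      rw [hcompute]
      exact R.isLongest_base hw₀ h
    · right
      rw [hcompute]
      have h4 := R.isLongest_maps_pos_neg hw₀ _ (R.neg_mem_posRoots h)
      rw [map_neg] at h4
      exact h4
  · have hg : w₀ * (w₀ * w * wp) * wp = (w₀ * w₀) * w * (wp * wp) := by group
    rw [hg, hw₀sq, hwpsq, one_mul, mul_one]
end
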